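/- Let 𝓕 be a family of transcendental entire functions (with D = ℂ) whose Julia like set J(𝓕) is nonempty and backward invariant, i.e. f⁻¹(J(𝓕)) ⊆ J(𝓕) for every f ∈ 𝓕. Then J(𝓕) is either a singleton or an infinite set. -/

import Mathlib

open Filter Topology Set

/-- Locally uniform divergence to `∞` on the set `s`: on every compact subset of `s`,
the moduli eventually exceed every bound, uniformly. -/
def TendstoLocallyUniformlyOnInfty (F : ℕ → ℂ → ℂ) (s : Set ℂ) : Prop :=
  ∀ K ⊆ s, IsCompact K → ∀ M : ℝ, ∀ᶠ n in Filter.atTop, ∀ z ∈ K, M ≤ ‖F n z‖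

/-- The family `𝓕` of functions holomorphic on `D` is normal at `z₀ ∈ D`: there is a
neighborhood `N ⊆ D` of `z₀` on which every sequence from `𝓕` has a subsequence converging
locally uniformly either to a holomorphic function or to `∞`. -/
def NormalAt (D : Set ℂ) (𝓕 : Set (ℂ → ℂ)) (z₀ : ℂ) : Prop :=
  ∃ N, N ⊆ D ∧ N ∈ 𝓝 z₀ ∧ ∀ f : ℕ → ℂ → ℂ, (∀ n, f n ∈ 𝓕) →
    ∃ φ : ℕ → ℕ, StrictMono φ ∧
      ((∃ g : ℂ → ℂ, DifferentiableOn ℂ g N ∧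
          TendstoLocallyUniformlyOn (fun n => f (φ n)) g Filter.atTop N) ∨
        TendstoLocallyUniformlyOnInfty (fun n => f (φ n)) N)

/-- The Fatou like set of `𝓕` on `D`: points of `D` where `𝓕` is normal. -/
def FatouSet (D : Set ℂ) (𝓕 : Set (ℂ → ℂ)) : Set ℂ := {z | z ∈ D ∧ NormalAt D 𝓕 z}

/-- The Julia like set of `𝓕` on `D`. -/
def JuliaSet (D : Set ℂ) (𝓕 : Set (ℂ → ℂ)) : Set ℂ := D \ FatouSet D 𝓕

/-- The backward orbit of `z` with respect to `𝓕`. -/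
def BackwardOrbit (D : Set ℂ) (𝓕 : Set (ℂ → ℂ)) (z : ℂ) : Set ℂ :=
  {w | w ∈ D ∧ ∃ f ∈ 𝓕, f w = z}

/-- The exceptional set of `𝓕`: points with finite backward orbit. -/
def ExceptionalSet (D : Set ℂ) (𝓕 : Set (ℂ → ℂ)) : Set ℂ :=
  {z | (BackwardOrbit D 𝓕 z).Finite}

/-- The escaping like set `I(𝓕)`: points `z ∈ D` such that `f n z → ∞` for every
infinite (i.e. injective) sequence `f` in `𝓕`. -/
def EscapingSet (D : Set ℂ) (𝓕 : Set (ℂ → ℂ)) : Set ℂ :=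
  {z | z ∈ D ∧ ∀ f : ℕ → ℂ → ℂ, (∀ n, f n ∈ 𝓕) → Function.Injective f →
    Filter.Tendsto (fun n => ‖f n z‖) Filter.atTop Filter.atTop}

/-- The generalized escaping like set `U(𝓕)`: points `z ∈ D` such that `f n z → ∞` for some
sequence `f` in `𝓕`. -/
def GenEscapingSet (D : Set ℂ) (𝓕 : Set (ℂ → ℂ)) : Set ℂ :=
  {z | z ∈ D ∧ ∃ f : ℕ → ℂ → ℂ, (∀ n, f n ∈ 𝓕) ∧
    Filter.Tendsto (fun n => ‖f n z‖) Filter.atTop Filter.atTop}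

/-- A transcendental entire function: entire and not a polynomial. -/
def TranscendentalEntire (f : ℂ → ℂ) : Prop :=
  Differentiable ℂ f ∧ ¬ ∃ p : Polynomial ℂ, ∀ z, f z = p.eval z

/-- Boundary of `A` relative to `D`; for `D` open and `A ⊆ D` this coincides with the
boundary of `A` in the subspace topology of `D`. -/
def relBoundary (D A : Set ℂ) : Set ℂ := D ∩ frontier A

/-- Closure of `A` in `D`; for `D` open and `A ⊆ D` this coincides with the closure of `A`
in the subspace topology of `D`. -/
def relClosure (D A : Set ℂ) : Set ℂ := D ∩ closure A


section Aux

open Metric Filter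

private lemma tluo_subseq {F : ℕ → ℂ → ℂ} {g : ℂ → ℂ} {s : Set ℂ} {φ : ℕ → ℕ}
    (h : TendstoLocallyUniformlyOn F g Filter.atTop s) (hφ : StrictMono φ) :
    TendstoLocallyUniformlyOn (fun n => F (φ n)) g Filter.atTop s := by
  intro u hu x hx
  obtain ⟨t, ht, hev⟩ := h u hu x hx
  exact ⟨t, ht, hφ.tendsto_atTop.eventually hev⟩

private lemma infty_subseq {F : ℕ → ℂ → ℂ} {s : Set ℂ} {φ : ℕ → ℕ}
    (h : TendstoLocallyUniformlyOnInfty F s) (hφ : StrictMono φ) :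
    TendstoLocallyUniformlyOnInfty (fun n => F (φ n)) s :=
  fun K hK hKc M => hφ.tendsto_atTop.eventually (h K hK hKc M)

private lemma clash {F : ℕ → ℂ → ℂ} {g : ℂ → ℂ} {s₁ s₂ : Set ℂ} {z : ℂ}
    (h1 : TendstoLocallyUniformlyOn F g Filter.atTop s₁) (hz1 : z ∈ s₁)
    (h2 : TendstoLocallyUniformlyOnInfty F s₂) (hz2 : z ∈ s₂) : False := by
  have hconv : Filter.Tendsto (fun n => F n z) Filter.atTop (𝓝 (g z)) := h1.tendsto_at hz1
  have hnorm : Filter.Tendsto (fun n => ‖F n z‖) Filter.atTop Filter.atTop := by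
    rw [Filter.tendsto_atTop]
    intro M
    exact (h2 {z} (Set.singleton_subset_iff.2 hz2) isCompact_singleton M).mono
      (fun n hn => hn z rfl)
  exact not_tendsto_atTop_of_tendsto_nhds hconv.norm hnorm

private lemma extract_finset (𝓕 : Set (ℂ → ℂ)) (P : ℂ → (ℕ → ℂ → ℂ) → Prop)
    (hstab : ∀ x (F : ℕ → ℂ → ℂ) (φ : ℕ → ℕ), P x F → StrictMono φ →
      P x (fun n => F (φ n)))
    (T : Finset ℂ) :
    (∀ x ∈ T, ∀ F : ℕ → ℂ → ℂ, (∀ n, F n ∈ 𝓕) →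
      ∃ φ : ℕ → ℕ, StrictMono φ ∧ P x (fun n => F (φ n))) →
    ∀ f : ℕ → ℂ → ℂ, (∀ n, f n ∈ 𝓕) →
      ∃ ψ : ℕ → ℕ, StrictMono ψ ∧ ∀ x ∈ T, P x (fun n => f (ψ n)) := by
  classical
  induction T using Finset.induction_on with
  | empty => exact fun _ f hf => ⟨id, strictMono_id, by simp⟩
  | @insert a s ha ih =>
      intro H f hf
      obtain ⟨φ₁, hφ₁, hP₁⟩ := H a (Finset.mem_insert_self a s) f hf
      obtain ⟨ψ', hψ', hP'⟩ := ih (fun x hx F hF => H x (Finset.mem_insert_of_mem hx) F hF)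
        (fun n => f (φ₁ n)) (fun n => hf (φ₁ n))
      refine ⟨fun n => φ₁ (ψ' n), hφ₁.comp hψ', ?_⟩
      intro x hx
      rcases Finset.mem_insert.1 hx with rfl | hx'
      · exact hstab x (fun n => f (φ₁ n)) ψ' hP₁ hψ'
      · exact hP' x hx'

end Aux

/-- Let `𝓕` be a family of transcendental entire functions whose Julia
like set is nonempty and backward invariant. Then `J(𝓕)` is a singleton or infinite. -/
theorem julia_singleton_or_infinite (𝓕 : Set (ℂ → ℂ))
    (htra : ∀ f ∈ 𝓕, TranscendentalEntire f)
    (hne : (JuliaSet Set.univ 𝓕).Nonempty)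
    (hback : ∀ f ∈ 𝓕, f ⁻¹' JuliaSet Set.univ 𝓕 ⊆ JuliaSet Set.univ 𝓕) :
    (∃ z₀ : ℂ, JuliaSet Set.univ 𝓕 = {z₀}) ∨ (JuliaSet Set.univ 𝓕).Infinite := by
  classical
  set J := JuliaSet Set.univ 𝓕 with hJdef
  rcases J.finite_or_infinite with hfin | hinf
  swap
  · exact Or.inr hinf
  obtain ⟨a, ha⟩ := hne
  by_cases hsub : J ⊆ {a}
  · exact Or.inl ⟨a, hsub.antisymm (Set.singleton_subset_iff.2 ha)⟩
  exfalso
  obtain ⟨w, hwJ, hwa⟩ : ∃ w ∈ J, w ≠ a := by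
    obtain ⟨w, hwJ, hw⟩ := Set.not_subset.1 hsub
    exact ⟨w, hwJ, fun h => hw (by simp [h])⟩
  -- isolation of `a` in `J`
  have hfin' : (J \ {a}).Finite := hfin.diff
  obtain ⟨ε₀, hε₀, hball₀⟩ : ∃ ε₀ > 0, Metric.ball a ε₀ ⊆ (J \ {a})ᶜ :=
    Metric.isOpen_iff.1 hfin'.isClosed.isOpen_compl a (by simp)
  set R := ε₀ / 2 with hRdef
  have hRpos : 0 < R := by positivity
  have hiso : ∀ z ∈ Metric.closedBall a R, z ∈ J → z = a := by
    intro z hz hzJ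
    by_contra hzne
    have hzb : z ∈ Metric.ball a ε₀ := by
      have : dist z a ≤ R := Metric.mem_closedBall.1 hz
      exact Metric.mem_ball.2 (lt_of_le_of_lt this (by simp [hRdef]; linarith))
    exact hball₀ hzb ⟨hzJ, hzne⟩
  set ρ := R / 2 with hρdef
  have hρpos : 0 < ρ := by positivity
  have hρleR : ρ ≤ R := by simp [hρdef]; linarith
  set S := Metric.sphere a ρ with hSdef
  have hSJ : ∀ x ∈ S, x ∉ J := by
    intro x hx hxJ
    have hx' : x ∈ Metric.closedBall a R :=
      Metric.mem_closedBall.2 (by rw [Metric.mem_sphere.1 hx] ; exact hρleR)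
    have hxa : x = a := hiso x hx' hxJ
    have : dist x a = ρ := Metric.mem_sphere.1 hx
    rw [hxa, dist_self] at this
    exact hρpos.ne this
  -- normality data around the sphere
  have hfatou : ∀ x, x ∉ J → NormalAt Set.univ 𝓕 x := by
    intro x hx
    by_contra hn
    exact hx ⟨Set.mem_univ x, fun hF => hn hF.2⟩
  have hnx : ∀ x, x ∈ S → ∃ Nx : Set ℂ, Nx ⊆ Set.univ ∧ Nx ∈ 𝓝 x ∧
      ∀ f : ℕ → ℂ → ℂ, (∀ n, f n ∈ 𝓕) →
        ∃ φ : ℕ → ℕ, StrictMono φ ∧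
          ((∃ g : ℂ → ℂ, DifferentiableOn ℂ g Nx ∧
              TendstoLocallyUniformlyOn (fun n => f (φ n)) g Filter.atTop Nx) ∨
            TendstoLocallyUniformlyOnInfty (fun n => f (φ n)) Nx) :=
    fun x hx => hfatou x (hSJ x hx)
  choose! N _hNsub hNnhds hNprop using hnx
  have hball' : ∀ x, x ∈ S → ∃ ε > 0, Metric.ball x ε ⊆ N x :=
    fun x hx => Metric.mem_nhds_iff.1 (hNnhds x hx)
  choose! ε hεpos hεball using hball'
  -- finite subcover of the sphere
  have hSsub : S ⊆ ⋃ x ∈ S, Metric.ball x (ε x / 2) := fun z hz =>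
    Set.mem_biUnion hz (Metric.mem_ball_self (by linarith [hεpos z hz]))
  obtain ⟨b', hb'S, hb'fin, hb'cov⟩ := (isCompact_sphere a ρ).elim_finite_subcover_image
    (fun x _ => Metric.isOpen_ball) hSsub
  set T := hb'fin.toFinset with hTdef
  have hTmem : ∀ x, x ∈ T ↔ x ∈ b' := fun x => hb'fin.mem_toFinset
  have hTS : ∀ x ∈ T, x ∈ S := fun x hx => hb'S ((hTmem x).1 hx)
  set K : ℂ → Set ℂ := fun x => S ∩ Metric.closedBall x (ε x / 2) with hKdef
  have hKcpt : ∀ x, IsCompact (K x) :=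
    fun x => (isCompact_sphere a ρ).inter_right Metric.isClosed_closedBall
  have hKsubN : ∀ x ∈ T, K x ⊆ N x := by
    intro x hx z hz
    exact hεball x (hTS x hx)
      (Metric.closedBall_subset_ball (by linarith [hεpos x (hTS x hx)]) hz.2)
  have hKint : ∀ x ∈ T, K x ⊆ interior (N x) := by
    intro x hx z hz
    exact interior_maximal (hεball x (hTS x hx)) Metric.isOpen_ball
      (Metric.closedBall_subset_ball (by linarith [hεpos x (hTS x hx)]) hz.2)
  have hScoverK : ∀ z ∈ S, ∃ x ∈ T, z ∈ K x := by
    intro z hz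
    obtain ⟨x, hxb', hzx⟩ := Set.mem_iUnion₂.1 (hb'cov hz)
    exact ⟨x, (hTmem x).2 hxb', hz, Metric.ball_subset_closedBall hzx⟩
  have hballN : ∀ x ∈ T, Metric.ball x (ε x / 2) ⊆ N x := by
    intro x hx z hz
    exact hεball x (hTS x hx) (Metric.ball_subset_ball (by linarith [hεpos x (hTS x hx)]) hz)
  -- the contradiction: 𝓕 is normal at a
  have hnormal : NormalAt Set.univ 𝓕 a := by
    refine ⟨Metric.ball a (ρ / 2), Set.subset_univ _,
      Metric.ball_mem_nhds a (by positivity), ?_⟩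
    intro f hf
    set P : ℂ → (ℕ → ℂ → ℂ) → Prop := fun x F =>
      (∃ g : ℂ → ℂ, DifferentiableOn ℂ g (N x) ∧
          TendstoLocallyUniformlyOn F g Filter.atTop (N x)) ∨
        TendstoLocallyUniformlyOnInfty F (N x) with hPdef
    have hstab : ∀ x (F : ℕ → ℂ → ℂ) (φ : ℕ → ℕ), P x F → StrictMono φ →
        P x (fun n => F (φ n)) := by
      intro x F φ h hφ
      rcases h with ⟨g, hg, ht⟩ | h
      · exact Or.inl ⟨g, hg, tluo_subseq ht hφ⟩
      · exact Or.inr (infty_subseq h hφ)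
    obtain ⟨ψ, hψ, hPall⟩ := extract_finset 𝓕 P hstab T
      (fun x hx F hF => hNprop x (hTS x hx) F hF) f hf
    refine ⟨ψ, hψ, ?_⟩
    set F : ℕ → ℂ → ℂ := fun n => f (ψ n) with hFdef
    set Tc : Finset ℂ := T.filter (fun x =>
      ∃ g : ℂ → ℂ, DifferentiableOn ℂ g (N x) ∧
        TendstoLocallyUniformlyOn F g Filter.atTop (N x)) with hTcdef
    have hconv : ∀ x ∈ Tc, ∃ g : ℂ → ℂ, DifferentiableOn ℂ g (N x) ∧
        TendstoLocallyUniformlyOn F g Filter.atTop (N x) :=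
      fun x hx => (Finset.mem_filter.1 hx).2
    have hinfT : ∀ x ∈ T \ Tc, TendstoLocallyUniformlyOnInfty F (N x) := by
      intro x hx
      have hxT := (Finset.mem_sdiff.1 hx).1
      have hnot := (Finset.mem_sdiff.1 hx).2
      rcases hPall x hxT with hc | hi
      · exact absurd (Finset.mem_filter.2 ⟨hxT, hc⟩) hnot
      · exact hi
    set U : Set ℂ := ⋃ x ∈ Tc, Metric.ball x (ε x / 2) with hUdef
    set V : Set ℂ := ⋃ x ∈ T \ Tc, Metric.ball x (ε x / 2) with hVdef
    have hUopen : IsOpen U := isOpen_biUnion fun _ _ => Metric.isOpen_ball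
    have hVopen : IsOpen V := isOpen_biUnion fun _ _ => Metric.isOpen_ball
    have hUV : ∀ z, z ∈ U → z ∈ V → False := by
      intro z hzU hzV
      obtain ⟨x, hxTc, hzx⟩ := Set.mem_iUnion₂.1 hzU
      obtain ⟨y, hyTV, hzy⟩ := Set.mem_iUnion₂.1 hzV
      obtain ⟨g, _, hgt⟩ := hconv x hxTc
      exact clash hgt (hballN x (Finset.filter_subset _ _ hxTc) hzx)
        (hinfT y hyTV) (hballN y (Finset.sdiff_subset hyTV) hzy)
    have hcover : S ⊆ U ∪ V := by
      intro z hz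
      obtain ⟨x, hxb', hzx⟩ := Set.mem_iUnion₂.1 (hb'cov hz)
      have hxT : x ∈ T := (hTmem x).2 hxb'
      by_cases hxc : x ∈ Tc
      · exact Or.inl (Set.mem_biUnion hxc hzx)
      · exact Or.inr (Set.mem_biUnion (Finset.mem_sdiff.2 ⟨hxT, hxc⟩) hzx)
    have hSconn : IsPreconnected S := by
      refine (isConnected_sphere ?_ a hρpos.le).isPreconnected
      rw [Complex.rank_real_complex]
      norm_num
    -- dichotomy on the sphere
    rcases Set.eq_empty_or_nonempty (S ∩ V) with hSV | hSV
    · -- convergent on the whole sphere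
      have hSU : S ⊆ U := by
        intro z hz
        rcases hcover hz with h | h
        · exact h
        · exact absurd ⟨hz, h⟩ (Set.eq_empty_iff_forall_notMem.1 hSV z)
      have hUCS : ∀ x ∈ T, UniformCauchySeqOn F Filter.atTop (K x) := by
        intro x hxT
        by_cases hxc : x ∈ Tc
        · obtain ⟨g, _, hgt⟩ := hconv x hxc
          have h1 : TendstoLocallyUniformlyOn F g Filter.atTop (interior (N x)) :=
            hgt.mono interior_subset
          have h2 := (tendstoLocallyUniformlyOn_iff_forall_isCompact isOpen_interior).1 h1
            (K x) (hKint x hxT) (hKcpt x)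
          exact h2.uniformCauchySeqOn
        · rcases Set.eq_empty_or_nonempty (K x) with hKe | ⟨z₀, hz₀⟩
          · intro u hu
            rw [hKe]
            filter_upwards with p z hz using absurd hz (Set.notMem_empty z)
          · obtain ⟨y, hyTc, hzy⟩ := Set.mem_iUnion₂.1 (hSU hz₀.1)
            obtain ⟨g, _, hgt⟩ := hconv y hyTc
            exact (clash hgt (hballN y (Finset.filter_subset _ _ hyTc) hzy)
              (hinfT x (Finset.mem_sdiff.2 ⟨hxT, hxc⟩)) (hKsubN x hxT hz₀)).elim
      have hCS : ∀ ε' > (0:ℝ), ∃ n₀ : ℕ, ∀ m ≥ n₀, ∀ n ≥ n₀,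
          ∀ z ∈ Metric.closedBall a ρ, dist (F m z) (F n z) < ε' := by
        intro ε' hε'
        have hX : ∀ x, ∃ n₀ : ℕ, x ∈ T → ∀ m ≥ n₀, ∀ n ≥ n₀,
            ∀ z ∈ K x, dist (F m z) (F n z) < ε' / 2 := by
          intro x
          by_cases hxT : x ∈ T
          · obtain ⟨n₀, h⟩ := Metric.uniformCauchySeqOn_iff.1 (hUCS x hxT) (ε' / 2)
              (by positivity)
            exact ⟨n₀, fun _ => h⟩
          · exact ⟨0, fun h => absurd h hxT⟩
        choose n₀f hn₀f using hX
        refine ⟨T.sup n₀f, fun m hm n hn z hz => ?_⟩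
        have hsph : ∀ y ∈ Metric.sphere a ρ, ‖F m y - F n y‖ ≤ ε' / 2 := by
          intro y hy
          obtain ⟨x, hxT, hyK⟩ := hScoverK y hy
          have h1 := hn₀f x hxT m (le_trans (Finset.le_sup hxT) hm) n
            (le_trans (Finset.le_sup hxT) hn) y hyK
          rw [dist_eq_norm] at h1
          exact h1.le
        have hdm : Differentiable ℂ (fun y => F m y - F n y) :=
          ((htra _ (hf (ψ m))).1).sub ((htra _ (hf (ψ n))).1)
        have hmax := Complex.norm_le_of_forall_mem_frontier_norm_le
          Metric.isBounded_ball hdm.diffContOnCl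
          (C := ε' / 2)
          (fun y hy => by
            rw [frontier_ball a hρpos.ne'] at hy
            exact hsph y hy)
          (z := z)
          (by rw [closure_ball a hρpos.ne']; exact hz)
        rw [dist_eq_norm]
        linarith [half_lt_self hε']
      have hcauchy : ∀ z ∈ Metric.closedBall a ρ, CauchySeq (fun n => F n z) := by
        intro z hz
        rw [Metric.cauchySeq_iff]
        intro ε' hε'
        obtain ⟨n₀, h⟩ := hCS ε' hε'
        exact ⟨n₀, fun m hm n hn => h m hm n hn z hz⟩
      set G : ℂ → ℂ := fun z => limUnder Filter.atTop (fun n => F n z) with hGdef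
      have hGt : ∀ z ∈ Metric.closedBall a ρ,
          Filter.Tendsto (fun n => F n z) Filter.atTop (𝓝 (G z)) :=
        fun z hz => by rw [hGdef]; exact (hcauchy z hz).tendsto_limUnder
      have hTU : TendstoUniformlyOn F G Filter.atTop (Metric.closedBall a ρ) := by
        rw [Metric.tendstoUniformlyOn_iff]
        intro ε' hε'
        obtain ⟨n₀, h⟩ := hCS (ε' / 2) (by positivity)
        filter_upwards [Filter.eventually_ge_atTop n₀] with n hn
        intro z hz
        have hle : dist (G z) (F n z) ≤ ε' / 2 := by
          have h1 : Filter.Tendsto (fun m => dist (F m z) (F n z)) Filter.atTop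
              (𝓝 (dist (G z) (F n z))) := (hGt z hz).dist tendsto_const_nhds
          refine le_of_tendsto h1 ?_
          filter_upwards [Filter.eventually_ge_atTop n₀] with m hm
          exact (h m hm n hn z hz).le
        linarith [half_lt_self hε']
      have hTLU : TendstoLocallyUniformlyOn F G Filter.atTop (Metric.ball a ρ) :=
        hTU.tendstoLocallyUniformlyOn.mono Metric.ball_subset_closedBall
      have hGd : DifferentiableOn ℂ G (Metric.ball a ρ) :=
        hTLU.differentiableOn
          (Filter.Eventually.of_forall fun n => ((htra _ (hf (ψ n))).1).differentiableOn)
          Metric.isOpen_ball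
      exact Or.inl ⟨G, hGd.mono (Metric.ball_subset_ball (by linarith)),
        hTLU.mono (Metric.ball_subset_ball (by linarith))⟩
    · rcases Set.eq_empty_or_nonempty (S ∩ U) with hSU | hSU
      · -- divergent on the whole sphere
        have hSV' : S ⊆ V := by
          intro z hz
          rcases hcover hz with h | h
          · exact absurd ⟨hz, h⟩ (Set.eq_empty_iff_forall_notMem.1 hSU z)
          · exact h
        refine Or.inr ?_
        intro Kc hKc _ M
        set B := max ‖a‖ ‖w‖ with hBdef
        have hB0 : 0 ≤ B := le_trans (norm_nonneg a) (le_max_left _ _)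
        set M₁ := max M 0 + 2 * B + 1 with hM₁def
        have hsphere_ev : ∀ᶠ n in Filter.atTop, ∀ z ∈ S, M₁ ≤ ‖F n z‖ := by
          have hver : ∀ x ∈ (T : Set ℂ), ∀ᶠ n in Filter.atTop,
              ∀ z ∈ K x, M₁ ≤ ‖F n z‖ := by
            intro x hxT
            by_cases hxc : x ∈ Tc
            · rcases Set.eq_empty_or_nonempty (K x) with hKe | ⟨z₀, hz₀⟩
              · filter_upwards with n z hz
                rw [hKe] at hz
                exact absurd hz (Set.notMem_empty z)
              · obtain ⟨y, hyTV, hzy⟩ := Set.mem_iUnion₂.1 (hSV' hz₀.1)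
                obtain ⟨g, _, hgt⟩ := hconv x hxc
                exact (clash hgt (hKsubN x hxT hz₀)
                  (hinfT y hyTV) (hballN y (Finset.sdiff_subset hyTV) hzy)).elim
            · exact hinfT x (Finset.mem_sdiff.2 ⟨hxT, hxc⟩) (K x) (hKsubN x hxT)
                (hKcpt x) M₁
          have hall := (Filter.eventually_all_finite T.finite_toSet).2 hver
          filter_upwards [hall] with n hn z hz
          obtain ⟨x, hxT, hzK⟩ := hScoverK z hz
          exact hn x hxT z hzK
        filter_upwards [hsphere_ev] with n hn z hzK
        have hfn : f (ψ n) ∈ 𝓕 := hf (ψ n)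
        have hdiff : Differentiable ℂ (f (ψ n)) := (htra _ hfn).1
        set d : ℂ := if f (ψ n) a = a then w else a with hddef
        have hdJ : d ∈ J := by
          rw [hddef]; split_ifs
          · exact hwJ
          · exact ha
        have hdne : f (ψ n) a ≠ d := by
          rw [hddef]; split_ifs with h
          · rw [h]; exact fun hh => hwa hh.symm
          · exact h
        have hdB : ‖d‖ ≤ B := by
          rw [hddef]; split_ifs
          · exact le_max_right _ _
          · exact le_max_left _ _
        have hzero : ∀ y ∈ Metric.closedBall a ρ, f (ψ n) y - d ≠ 0 := by
          intro y hy h0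
          have heq : f (ψ n) y = d := sub_eq_zero.1 h0
          have hyJ : y ∈ J := hback _ hfn (by
            rw [Set.mem_preimage, heq]; exact hdJ)
          have hya : y = a :=
            hiso y (Metric.closedBall_subset_closedBall hρleR hy) hyJ
          rw [hya] at heq
          exact hdne heq
        set u : ℂ → ℂ := fun y => (f (ψ n) y - d)⁻¹ with hudef
        have hudc : DiffContOnCl ℂ u (Metric.ball a ρ) := by
          constructor
          · exact ((hdiff.sub_const d).differentiableOn).inv
              (fun y hy => hzero y (Metric.ball_subset_closedBall hy))
          · rw [closure_ball a hρpos.ne']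
            exact ((hdiff.sub_const d).continuous.continuousOn).inv₀
              (fun y hy => hzero y hy)
        have hcpos : (0:ℝ) < max M 0 + B + 1 := by
          have := le_max_right M 0
          linarith
        have hfront : ∀ y ∈ frontier (Metric.ball a ρ),
            ‖u y‖ ≤ (max M 0 + B + 1)⁻¹ := by
          intro y hy
          rw [frontier_ball a hρpos.ne'] at hy
          have h1 : M₁ ≤ ‖f (ψ n) y‖ := hn y hy
          have h2 : max M 0 + B + 1 ≤ ‖f (ψ n) y - d‖ := by
            have h3 : ‖f (ψ n) y‖ - ‖d‖ ≤ ‖f (ψ n) y - d‖ := norm_sub_norm_le _ _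
            rw [hM₁def] at h1
            linarith
          have h4 : (0:ℝ) < ‖f (ψ n) y - d‖ := lt_of_lt_of_le hcpos h2
          rw [hudef]
          simp only [norm_inv]
          exact inv_anti₀ hcpos h2
        have hzball : z ∈ Metric.ball a ρ :=
          Metric.ball_subset_ball (by linarith) (hKc hzK)
        have hmax := Complex.norm_le_of_forall_mem_frontier_norm_le
          Metric.isBounded_ball hudc hfront (subset_closure hzball)
        have hnz : f (ψ n) z - d ≠ 0 := hzero z (Metric.ball_subset_closedBall hzball)
        have hpos : (0:ℝ) < ‖f (ψ n) z - d‖ := norm_pos_iff.2 hnz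
        rw [hudef] at hmax
        simp only [norm_inv] at hmax
        have h5 : max M 0 + B + 1 ≤ ‖f (ψ n) z - d‖ := by
          by_contra hlt
          push_neg at hlt
          have := inv_strictAnti₀ hpos hlt
          linarith
        have h6 : ‖f (ψ n) z - d‖ ≤ ‖f (ψ n) z‖ + ‖d‖ := norm_sub_le _ _
        have h7 := le_max_left M 0
        linarith
      · -- mixed: impossible
        obtain ⟨z, hzS, hzU, hzV⟩ := hSconn U V hUopen hVopen hcover hSU hSV
        exact (hUV z hzU hzV).elim
  exact ha.2 ⟨Set.mem_univ a, hnormal⟩
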